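/- Fix 2 ≤ p < ∞. Let P_1, ..., P_l ∈ C[x] be pairwise coprime and U_1, ..., U_l ∈ C[x] satisfy Σ_j U_j Π_{i≠j} P_i = 1. For a complex sequence α, the following are equivalent: (i) α ∈ ℓ^p and P_1(S)···P_l(S)α ∈ ℓ^2; (ii) setting β^{(j)} = U_j(S) Π_{i≠j} P_i(S) α, each β^{(j)} ∈ ℓ^p, P_j(S)β^{(j)} ∈ ℓ^2, and α = β^{(1)} + ··· + β^{(l)}; (iii) there exist sequences β^{(1)}, ..., β^{(l)} ∈ ℓ^p with α = β^{(1)} + ··· + β^{(l)} and P_j(S)β^{(j)} ∈ ℓ^2 for each j. -/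

import Mathlib

open Polynomial ENNReal Finset

/-- The action of the polynomial `Q` in the shift operator `S`, `(Sx)_n = x_{n+1}`,
on a complex sequence. -/
noncomputable def polyShift (Q : Polynomial ℂ) (γ : ℕ → ℂ) : ℕ → ℂ :=
  fun n => Q.sum fun i c => c * γ (n + i)

/-- The shift operator as a linear endomorphism. -/
noncomputable def shiftL : Module.End ℂ (ℕ → ℂ) where
  toFun γ := fun n => γ (n + 1)
  map_add' _ _ := rfl
  map_smul' _ _ := rfl

lemma shiftL_pow (k : ℕ) (γ : ℕ → ℂ) (n : ℕ) : (shiftL ^ k) γ n = γ (n + k) := by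
  induction k generalizing γ with
  | zero => rfl
  | succ m ih =>
    have : (shiftL ^ (m + 1)) γ = (shiftL ^ m) (shiftL γ) := by
      rw [pow_succ, Module.End.mul_apply]
    rw [this, ih (shiftL γ)]
    simp only [shiftL, LinearMap.coe_mk, AddHom.coe_mk]
    ring_nf

lemma polyShift_eq_aeval (Q : Polynomial ℂ) (γ : ℕ → ℂ) :
    polyShift Q γ = (aeval shiftL Q) γ := by
  induction Q using Polynomial.induction_on' with
  | add Q R hQ hR =>
    funext n
    have h0 : ∀ i : ℕ, (0 : ℂ) * γ (n + i) = 0 := by intro i; ring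
    have hadd : ∀ (i : ℕ) (a b : ℂ),
        (a + b) * γ (n + i) = a * γ (n + i) + b * γ (n + i) := by intro i a b; ring
    have : polyShift (Q + R) γ n = polyShift Q γ n + polyShift R γ n := by
      simp only [polyShift]
      exact Polynomial.sum_add_index Q R _ h0 hadd
    rw [this, hQ, hR, map_add]
    rfl
  | monomial k c =>
    funext n
    have h1 : polyShift ((monomial k) c) γ n = c * γ (n + k) := by
      simp only [polyShift]
      exact Polynomial.sum_monomial_index c _ (by ring)
    rw [h1, aeval_monomial]
    have : ((algebraMap ℂ (Module.End ℂ (ℕ → ℂ))) c * shiftL ^ k) γ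
        = c • ((shiftL ^ k) γ) := by
      simp [Module.End.mul_apply, Algebra.algebraMap_eq_smul_one]
    rw [this]
    simp [shiftL_pow]

lemma polyShift_mul (Q R : Polynomial ℂ) (γ : ℕ → ℂ) :
    polyShift (Q * R) γ = polyShift Q (polyShift R γ) := by
  simp [polyShift_eq_aeval, map_mul, Module.End.mul_apply]

lemma polyShift_one (γ : ℕ → ℂ) : polyShift 1 γ = γ := by
  simp [polyShift_eq_aeval]

lemma memℓp_shift (q : ℝ≥0∞) (γ : ℕ → ℂ) (k : ℕ) (h : Memℓp γ q) :
    Memℓp (fun n => γ (n + k)) q := by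
  rcases q.trichotomy with (rfl | rfl | hq)
  · apply memℓp_zero
    have : {n : ℕ | γ (n + k) ≠ 0} ⊆ (fun n => n + k) ⁻¹' {n : ℕ | γ n ≠ 0} := by
      intro n hn; exact hn
    exact Set.Finite.subset (Set.Finite.preimage (Function.Injective.injOn
      (add_left_injective k)) h.finite_dsupport) this
  · apply memℓp_infty
    refine h.bddAbove.mono ?_
    rintro x ⟨n, rfl⟩
    exact ⟨n + k, rfl⟩
  · apply memℓp_gen
    have hs := (h.summable hq).comp_injective (add_left_injective k)
    exact hs

lemma memℓp_fin_sum {q : ℝ≥0∞} {m : ℕ} (f : Fin m → ℕ → ℂ) (s : Finset (Fin m))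
    (h : ∀ j ∈ s, Memℓp (f j) q) :
    Memℓp (fun n => ∑ j ∈ s, f j n) q := by
  induction s using Finset.cons_induction with
  | empty => simpa [Pi.zero_def] using (zero_memℓp : Memℓp (0 : ℕ → ℂ) q)
  | cons a s ha ih =>
    simp only [Finset.sum_cons]
    exact ((h a (Finset.mem_cons_self a s)).add
      (ih fun j hj => h j (Finset.mem_cons_of_mem hj)) :)

lemma memℓp_polyShift (q : ℝ≥0∞) (Q : Polynomial ℂ) (γ : ℕ → ℂ) (h : Memℓp γ q) :
    Memℓp (polyShift Q γ) q := by
  have : polyShift Q γ = fun n => ∑ i ∈ Q.support, Q.coeff i * γ (n + i) := rfl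
  rw [this]
  classical
  have : (fun n => ∑ i ∈ Q.support, Q.coeff i * γ (n + i))
      = fun n => ∑ i ∈ Finset.range (Q.natDegree + 1), Q.coeff i * γ (n + i) := by
    funext n
    exact Finset.sum_subset Polynomial.supp_subset_range_natDegree_succ
      (fun i _ hi => by simp [Polynomial.notMem_support_iff.mp hi])
  rw [this]
  induction (Finset.range (Q.natDegree + 1)) using Finset.cons_induction with
  | empty => simpa [Pi.zero_def] using (zero_memℓp : Memℓp (0 : ℕ → ℂ) q)
  | cons a s ha ih =>
    simp only [Finset.sum_cons]
    refine Memℓp.add ?_ ih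
    have := (memℓp_shift q γ a h).const_smul (Q.coeff a)
    exact this

lemma polyShift_sum_left {m : ℕ} (Q : Fin m → Polynomial ℂ) (γ : ℕ → ℂ) (n : ℕ) :
    polyShift (∑ j, Q j) γ n = ∑ j, polyShift (Q j) γ n := by
  simp only [polyShift_eq_aeval, map_sum]
  simp [Module.End.mul_apply]

lemma polyShift_sum_right {m : ℕ} (Q : Polynomial ℂ) (β : Fin m → ℕ → ℂ) (n : ℕ) :
    polyShift Q (fun k => ∑ j, β j k) n = ∑ j, polyShift Q (β j) n := by
  simp only [polyShift_eq_aeval]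
  have : (fun k => ∑ j, β j k) = ∑ j, β j := by funext k; simp
  rw [this, map_sum]
  simp

theorem decomposition_tfae (p : ℝ≥0∞) (hp2 : 2 ≤ p) (hptop : p ≠ ∞)
    (l : ℕ) (hl : 1 ≤ l) (P U : Fin l → Polynomial ℂ)
    (hP : Pairwise (Function.onFun IsCoprime P))
    (hU : ∑ j : Fin l, U j * ∏ i ∈ Finset.univ.erase j, P i = 1)
    (α : ℕ → ℂ) :
    List.TFAE
      [ Memℓp α p ∧ Memℓp (polyShift (∏ i : Fin l, P i) α) 2,
        (∀ j : Fin l,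
            Memℓp (polyShift (U j * ∏ i ∈ Finset.univ.erase j, P i) α) p ∧
            Memℓp (polyShift (P j) (polyShift (U j * ∏ i ∈ Finset.univ.erase j, P i) α)) 2) ∧
          α = fun n => ∑ j : Fin l, polyShift (U j * ∏ i ∈ Finset.univ.erase j, P i) α n,
        ∃ β : Fin l → (ℕ → ℂ),
          (∀ j, Memℓp (β j) p ∧ Memℓp (polyShift (P j) (β j)) 2) ∧
            α = fun n => ∑ j : Fin l, β j n ] := by
  tfae_have 1 → 2 := by
    rintro ⟨hα, hPα⟩
    constructor
    · intro j
      refine ⟨memℓp_polyShift p _ α hα, ?_⟩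
      have key : P j * (U j * ∏ i ∈ Finset.univ.erase j, P i) = U j * ∏ i : Fin l, P i := by
        rw [← Finset.mul_prod_erase Finset.univ P (Finset.mem_univ j)]
        ring
      rw [← polyShift_mul, key, polyShift_mul]
      exact memℓp_polyShift 2 _ _ hPα
    · funext n
      rw [← polyShift_sum_left, hU, polyShift_one]
  tfae_have 2 → 3 := by
    rintro ⟨h, hα⟩
    exact ⟨_, h, hα⟩
  tfae_have 3 → 1 := by
    rintro ⟨β, hβ, hα⟩
    constructor
    · rw [hα]
      exact memℓp_fin_sum β Finset.univ fun j _ => (hβ j).1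
    · rw [hα]
      have : polyShift (∏ i : Fin l, P i) (fun n => ∑ j : Fin l, β j n)
          = fun n => ∑ j : Fin l, polyShift (∏ i : Fin l, P i) (β j) n := by
        funext n; exact polyShift_sum_right _ β n
      rw [this]
      refine memℓp_fin_sum _ Finset.univ fun j _ => ?_
      have key : (∏ i : Fin l, P i) = (∏ i ∈ Finset.univ.erase j, P i) * P j := by
        rw [Finset.prod_erase_mul Finset.univ P (Finset.mem_univ j)]
      rw [key, polyShift_mul]
      exact memℓp_polyShift 2 _ _ (hβ j).2
  tfae_finish
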